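/- The L-transform preserves and reflects bisimilarity: EF(F,P) is (strongly) bisimilar to EF(F,Q) in the transformed transition system L(T) if and only if P is F/L-bisimilar to Q in T. -/
import Mathlib


open scoped Classical

universe u v

abbrev Atom : Type := ℕ

/-- A permutation of atoms is finitary if it moves only finitely many atoms. -/
def IsFinPerm (π : Equiv.Perm Atom) : Prop := {a : Atom | π a ≠ a}.Finite

/-- `N` supports `x` with respect to the permutation action `act`. -/
def SupportsAct {X : Type*} (act : Equiv.Perm Atom → X → X) (N : Set Atom) (x : X) : Prop :=
  ∀ π : Equiv.Perm Atom, IsFinPerm π → (∀ a ∈ N, π a = a) → act π x = x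

/-- The support of `x`: the intersection of all finite supporting sets. -/
def suppAct {X : Type*} (act : Equiv.Perm Atom → X → X) (x : X) : Set Atom :=
  ⋂₀ {N : Set Atom | N.Finite ∧ SupportsAct act N x}

/-- `x` is finitely supported. -/
def FinSuppAct {X : Type*} (act : Equiv.Perm Atom → X → X) (x : X) : Prop :=
  ∃ N : Set Atom, N.Finite ∧ SupportsAct act N x

/-- The pointwise action on subsets. -/
def setAct {X : Type*} (act : Equiv.Perm Atom → X → X) (π : Equiv.Perm Atom) (s : Set X) :
    Set X :=
  act π '' s

/-- A nominal set: a permutation action where every element is finitely supported. -/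
structure Nominal (X : Type*) where
  act : Equiv.Perm Atom → X → X
  act_one : ∀ x, act 1 x = x
  act_mul : ∀ π π' x, act (π * π') x = act π (act π' x)
  finSupp : ∀ x, FinSuppAct act x

/-- A nominal transition system. -/
structure NTS (States Pred Act : Type*) where
  nomS : Nominal States
  nomP : Nominal Pred
  nomA : Nominal Act
  sat : States → Pred → Prop
  sat_eqv : ∀ π, IsFinPerm π → ∀ P φ, sat P φ → sat (nomS.act π P) (nomP.act π φ)
  bn : Act → Finset Atom
  bn_eqv : ∀ π, IsFinPerm π → ∀ α, (bn (nomA.act π α) : Set Atom) = π '' (bn α : Set Atom)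
  bn_supp : ∀ α, (bn α : Set Atom) ⊆ suppAct nomA.act α
  tr : States → Act → States → Prop
  tr_eqv : ∀ π, IsFinPerm π → ∀ P α P', tr P α P' →
    tr (nomS.act π P) (nomA.act π α) (nomS.act π P')
  tr_alpha : ∀ (a b : Atom) (P : States) (α : Act) (P' : States), a ∈ bn α →
    b ∉ suppAct nomA.act α → b ∉ suppAct nomS.act P' → tr P α P' →
    tr P (nomA.act (Equiv.swap a b) α) (nomS.act (Equiv.swap a b) P')

variable {S Pr Ac : Type*}

/-- A (strong) bisimulation: symmetric, statically implicating, and simulating. -/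
def NTS.IsBisim (T : NTS S Pr Ac) (R : S → S → Prop) : Prop :=
  (∀ P Q, R P Q → R Q P) ∧
  ∀ P Q, R P Q →
    (∀ φ, T.sat P φ → T.sat Q φ) ∧
    (∀ α P', (∀ a ∈ T.bn α, a ∉ suppAct T.nomS.act Q) → T.tr P α P' →
      ∃ Q', T.tr Q α Q' ∧ R P' Q')

/-- Bisimilarity. -/
def NTS.Bisim (T : NTS S Pr Ac) (P Q : S) : Prop := ∃ R, T.IsBisim R ∧ R P Q
/-- A nominal transition system together with a nominal set of effects: finitely supported
functions from states to states, applied via `app`, with an equivariant application. -/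
structure EffStruct (S Pr Ac E : Type) where
  T : NTS S Pr Ac
  nomE : Nominal E
  app : E → S → S
  app_eqv : ∀ π : Equiv.Perm Atom, IsFinPerm π → ∀ f P,
    T.nomS.act π (app f P) = app (nomE.act π f) (T.nomS.act π P)

variable {S Pr Ac E : Type}

/-- Finitely supported sets of effects. -/
def EffStruct.FSF (ES : EffStruct S Pr Ac E) (F : Set E) : Prop :=
  FinSuppAct (setAct ES.nomE.act) F

/-- A (general) `L`-bisimulation: a family of symmetric relations indexed by finitely
supported sets of effects, satisfying static implication and simulation under effects. -/
def EffStruct.IsLBisim (ES : EffStruct S Pr Ac E) (L : Ac → Set E → E → Set E)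
    (R : Set E → S → S → Prop) : Prop :=
  ∀ F : Set E, ES.FSF F →
    (∀ P Q, R F P Q → R F Q P) ∧
    ∀ P Q, R F P Q →
      (∀ f ∈ F, ∀ φ, ES.T.sat (ES.app f P) φ → ES.T.sat (ES.app f Q) φ) ∧
      (∀ f ∈ F, ∀ α P',
        (∀ a ∈ ES.T.bn α, a ∉ suppAct ES.T.nomS.act (ES.app f Q) ∧
          a ∉ suppAct (setAct ES.nomE.act) F ∧ a ∉ suppAct ES.nomE.act f) →
        ES.T.tr (ES.app f P) α P' →
        ∃ Q', ES.T.tr (ES.app f Q) α Q' ∧ R (L α F f) P' Q')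

/-- `F/L`-bisimilarity. -/
def EffStruct.FLBisim (ES : EffStruct S Pr Ac E) (L : Ac → Set E → E → Set E)
    (F : Set E) (P Q : S) : Prop :=
  ∃ R, ES.IsLBisim L R ∧ R F P Q

/-- `L` is equivariant. -/
def EffStruct.LEquivariant (ES : EffStruct S Pr Ac E) (L : Ac → Set E → E → Set E) : Prop :=
  ∀ π : Equiv.Perm Atom, IsFinPerm π → ∀ α F f,
    L (ES.T.nomA.act π α) (setAct ES.nomE.act π F) (ES.nomE.act π f)
      = setAct ES.nomE.act π (L α F f)

/-- States of the `L`-transform: `ac f F P` (effect `f ∈ F` has just been applied) and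
`ef F P` (effects from `F` may be committed). -/
inductive LTState (S E : Type) : Type
  | ac : E → Set E → S → LTState S E
  | ef : Set E → S → LTState S E

variable {S Pr Ac E : Type}

/-- The permutation action on `L`-transform states. -/
def ltAct (ES : EffStruct S Pr Ac E) (π : Equiv.Perm Atom) : LTState S E → LTState S E
  | .ac f F P => .ac (ES.nomE.act π f) (setAct ES.nomE.act π F) (ES.T.nomS.act π P)
  | .ef F P => .ef (setAct ES.nomE.act π F) (ES.T.nomS.act π P)

/-- State predicates of the `L`-transform: those of `T` at `ac`-states, none at
`ef`-states. -/
def ltSat (ES : EffStruct S Pr Ac E) : LTState S E → Pr → Prop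
  | .ac _ _ P, φ => ES.T.sat P φ
  | .ef _ _, _ => False

/-- Binding names in the `L`-transform: those of `T` for actions, empty for effects. -/
def ltBn (ES : EffStruct S Pr Ac E) : Ac ⊕ E → Finset Atom
  | .inl α => ES.T.bn α
  | .inr _ => ∅

/-- Transitions of the `L`-transform:
`ac f F P ⟶α⟶ ef (L α F f) P'` whenever `P ⟶α⟶ P'` in `T` with `bn α` fresh for `f, F`,
and `ef F P ⟶f⟶ ac f F (f P)` for each `f ∈ F`. -/
def ltTr (ES : EffStruct S Pr Ac E) (L : Ac → Set E → E → Set E) :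
    LTState S E → Ac ⊕ E → LTState S E → Prop :=
  fun s a s' =>
    (∃ f F P α P', s = .ac f F P ∧ a = .inl α ∧ s' = .ef (L α F f) P' ∧
      (∀ x ∈ ES.T.bn α, x ∉ suppAct ES.nomE.act f ∧
        x ∉ suppAct (setAct ES.nomE.act) F) ∧
      ES.T.tr P α P') ∨
    (∃ f F P, s = .ef F P ∧ a = .inr f ∧ f ∈ F ∧ s' = .ac f F (ES.app f P))

/-- A strong bisimulation on the `L`-transform. -/
def ltIsBisim (ES : EffStruct S Pr Ac E) (L : Ac → Set E → E → Set E)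
    (R : LTState S E → LTState S E → Prop) : Prop :=
  (∀ P Q, R P Q → R Q P) ∧
  ∀ P Q, R P Q →
    (∀ φ, ltSat ES P φ → ltSat ES Q φ) ∧
    (∀ a P', (∀ x ∈ ltBn ES a, x ∉ suppAct (ltAct ES) Q) → ltTr ES L P a P' →
      ∃ Q', ltTr ES L Q a Q' ∧ R P' Q')

/-- Strong bisimilarity on the `L`-transform. -/
def ltBisim (ES : EffStruct S Pr Ac E) (L : Ac → Set E → E → Set E)
    (P Q : LTState S E) : Prop :=
  ∃ R, ltIsBisim ES L R ∧ R P Q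

lemma not_mem_suppAct_iff {X : Type*} (act : Equiv.Perm Atom → X → X) (x : X) (a : Atom) :
    a ∉ suppAct act x ↔ ∃ N : Set Atom, N.Finite ∧ SupportsAct act N x ∧ a ∉ N := by
  unfold suppAct
  rw [Set.mem_sInter]
  push_neg
  constructor
  · rintro ⟨N, ⟨h1, h2⟩, h3⟩; exact ⟨N, h1, h2, h3⟩
  · rintro ⟨N, h1, h2, h3⟩; exact ⟨N, ⟨h1, h2⟩, h3⟩

lemma ltAct_supports_ac (ES : EffStruct S Pr Ac E) {Nf NF Ns : Set Atom} {f : E} {F : Set E}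
    {s : S} (hf : SupportsAct ES.nomE.act Nf f) (hF : SupportsAct (setAct ES.nomE.act) NF F)
    (hs : SupportsAct ES.T.nomS.act Ns s) :
    SupportsAct (ltAct ES) (Nf ∪ NF ∪ Ns) (.ac f F s) := by
  intro π hπ hfix
  have h1 := hf π hπ (fun a ha => hfix a (Or.inl (Or.inl ha)))
  have h2 := hF π hπ (fun a ha => hfix a (Or.inl (Or.inr ha)))
  have h3 := hs π hπ (fun a ha => hfix a (Or.inr ha))
  simp [ltAct, h1, h2, h3]

lemma not_mem_supp_ltac (ES : EffStruct S Pr Ac E) {f : E} {F : Set E} {s : S} {a : Atom}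
    (h1 : a ∉ suppAct ES.nomE.act f) (h2 : a ∉ suppAct (setAct ES.nomE.act) F)
    (h3 : a ∉ suppAct ES.T.nomS.act s) : a ∉ suppAct (ltAct ES) (.ac f F s) := by
  rw [not_mem_suppAct_iff] at h1 h2 h3 ⊢
  obtain ⟨N1, hN1f, hN1s, hN1a⟩ := h1
  obtain ⟨N2, hN2f, hN2s, hN2a⟩ := h2
  obtain ⟨N3, hN3f, hN3s, hN3a⟩ := h3
  refine ⟨N1 ∪ N2 ∪ N3, (hN1f.union hN2f).union hN3f,
    ltAct_supports_ac ES hN1s hN2s hN3s, ?_⟩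
  simp only [Set.mem_union]
  tauto

lemma not_mem_supp_state_of_ltac (ES : EffStruct S Pr Ac E) {f : E} {F : Set E} {s : S}
    {a : Atom} (h : a ∉ suppAct (ltAct ES) (.ac f F s)) :
    a ∉ suppAct ES.T.nomS.act s := by
  rw [not_mem_suppAct_iff] at h ⊢
  obtain ⟨N, hfin, hsupp, ha⟩ := h
  refine ⟨N, hfin, ?_, ha⟩
  intro π hπ hfix
  have := hsupp π hπ hfix
  simp only [ltAct, LTState.ac.injEq] at this
  exact this.2.2

lemma fsf_L (ES : EffStruct S Pr Ac E) (L : Ac → Set E → E → Set E)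
    (hL : ES.LEquivariant L) (α : Ac) (f : E) {F : Set E} (hF : ES.FSF F) :
    ES.FSF (L α F f) := by
  obtain ⟨Nα, hNαf, hNαs⟩ := ES.T.nomA.finSupp α
  obtain ⟨Nf, hNff, hNfs⟩ := ES.nomE.finSupp f
  obtain ⟨NF, hNFf, hNFs⟩ := hF
  refine ⟨Nα ∪ Nf ∪ NF, (hNαf.union hNff).union hNFf, ?_⟩
  intro π hπ hfix
  have h1 := hNαs π hπ (fun a ha => hfix a (Or.inl (Or.inl ha)))
  have h2 := hNfs π hπ (fun a ha => hfix a (Or.inl (Or.inr ha)))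
  have h3 := hNFs π hπ (fun a ha => hfix a (Or.inr ha))
  have hh := hL π hπ α F f
  rw [h1, h2, h3] at hh
  exact hh.symm

/-- The `L`-transform preserves and reflects bisimilarity: `EF(F,P) ∼ EF(F,Q)` in `L(T)`
iff `P` and `Q` are `F/L`-bisimilar in `T`. -/
theorem ltransform_bisim_iff {S Pr Ac E : Type} (ES : EffStruct S Pr Ac E)
    (L : Ac → Set E → E → Set E) (hL : ES.LEquivariant L)
    (F : Set E) (hF : ES.FSF F) (P Q : S) :
    ltBisim ES L (.ef F P) (.ef F Q) ↔ ES.FLBisim L F P Q := by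
  constructor
  · rintro ⟨R, ⟨hsym, hbis⟩, hR⟩
    refine ⟨fun F P Q => R (.ef F P) (.ef F Q), ?_, hR⟩
    intro F hFSF
    refine ⟨fun P Q h => hsym _ _ h, ?_⟩
    intro P Q hPQ
    have key : ∀ f ∈ F, R (.ac f F (ES.app f P)) (.ac f F (ES.app f Q)) := by
      intro f hf
      have htr : ltTr ES L (.ef F P) (.inr f) (.ac f F (ES.app f P)) :=
        Or.inr ⟨f, F, P, rfl, rfl, hf, rfl⟩
      obtain ⟨Q', hQ'tr, hQ'R⟩ := (hbis _ _ hPQ).2 (.inr f) _ (by simp [ltBn]) htr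
      rcases hQ'tr with ⟨f', F', P'', α, P', h1, h2, _⟩ | ⟨f', F', P'', h1, h2, hmem, h3⟩
      · exact absurd h2 (by simp)
      · simp only [LTState.ef.injEq] at h1
        obtain ⟨rfl, rfl⟩ := h1
        simp only [Sum.inr.injEq] at h2
        subst h2
        rw [h3] at hQ'R
        exact hQ'R
    refine ⟨?_, ?_⟩
    · intro f hf φ hsat
      exact (hbis _ _ (key f hf)).1 φ hsat
    · intro f hf α P' hfresh htr
      have hac := key f hf
      have hltTr : ltTr ES L (.ac f F (ES.app f P)) (.inl α) (.ef (L α F f) P') :=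
        Or.inl ⟨f, F, ES.app f P, α, P', rfl, rfl, rfl,
          fun x hx => ⟨(hfresh x hx).2.2, (hfresh x hx).2.1⟩, htr⟩
      obtain ⟨Q', hQ'tr, hQ'R⟩ := (hbis _ _ hac).2 (.inl α) _
        (fun x hx => not_mem_supp_ltac ES (hfresh x hx).2.2 (hfresh x hx).2.1
          (hfresh x hx).1) hltTr
      rcases hQ'tr with ⟨f₀, F₀, P₀, α₀, Q'', h1, h2, h3, _, htrQ⟩ | ⟨f₀, F₀, P₀, h1, h2, _⟩
      · simp only [LTState.ac.injEq] at h1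
        obtain ⟨rfl, rfl, rfl⟩ := h1
        simp only [Sum.inl.injEq] at h2
        subst h2
        rw [h3] at hQ'R
        exact ⟨Q'', htrQ, hQ'R⟩
      · exact absurd h2 (by simp)
  · rintro ⟨R', hR'bis, hR'⟩
    refine ⟨fun s t =>
      (∃ F' P' Q', ES.FSF F' ∧ R' F' P' Q' ∧ s = .ef F' P' ∧ t = .ef F' Q') ∨
      (∃ f F' P' Q', f ∈ F' ∧ ES.FSF F' ∧ R' F' P' Q' ∧
        s = .ac f F' (ES.app f P') ∧ t = .ac f F' (ES.app f Q')),
      ⟨?_, ?_⟩, Or.inl ⟨F, P, Q, hF, hR', rfl, rfl⟩⟩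
    · rintro s t (⟨F', P', Q', h1, h2, h3, h4⟩ | ⟨f, F', P', Q', hm, h1, h2, h3, h4⟩)
      · exact Or.inl ⟨F', Q', P', h1, (hR'bis F' h1).1 _ _ h2, h4, h3⟩
      · exact Or.inr ⟨f, F', Q', P', hm, h1, (hR'bis F' h1).1 _ _ h2, h4, h3⟩
    · rintro s t (⟨F', P', Q', hFSF, hRR, rfl, rfl⟩ |
        ⟨f, F', P', Q', hm, hFSF, hRR, rfl, rfl⟩)
      · refine ⟨fun φ h => h.elim, ?_⟩
        intro a s' _ htr
        rcases htr with ⟨f₀, F₀, P₀, α, P'', h1, _⟩ | ⟨f₀, F₀, P₀, h1, h2, hmem, h3⟩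
        · exact absurd h1 (by simp)
        · simp only [LTState.ef.injEq] at h1
          obtain ⟨rfl, rfl⟩ := h1
          subst h2
          exact ⟨.ac f₀ F' (ES.app f₀ Q'), Or.inr ⟨f₀, F', Q', rfl, rfl, hmem, rfl⟩,
            Or.inr ⟨f₀, F', P', Q', hmem, hFSF, hRR, by rw [h3], rfl⟩⟩
      · refine ⟨?_, ?_⟩
        · intro φ hsat
          exact ((hR'bis F' hFSF).2 P' Q' hRR).1 f hm φ hsat
        · intro a s' hside htr
          rcases htr with ⟨f₀, F₀, P₀, α, P'', h1, rfl, rfl, hfresh, htrP⟩ |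
            ⟨f₀, F₀, P₀, h1, _⟩
          · simp only [LTState.ac.injEq] at h1
            obtain ⟨rfl, rfl, rfl⟩ := h1
            obtain ⟨Q'', htrQ, hRnext⟩ := ((hR'bis F' hFSF).2 P' Q' hRR).2 f hm α P''
              (fun x hx => ⟨not_mem_supp_state_of_ltac ES (hside x hx),
                (hfresh x hx).2, (hfresh x hx).1⟩) htrP
            exact ⟨.ef (L α F' f) Q'',
              Or.inl ⟨f, F', ES.app f Q', α, Q'', rfl, rfl, rfl, hfresh, htrQ⟩,
              Or.inl ⟨L α F' f, P'', Q'', fsf_L ES L hL α f hFSF, hRnext, rfl, rfl⟩⟩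
          · exact absurd h1 (by simp)
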